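/- arXiv:1301.3747 — 2 statements merged into one kernel-verified Lean document; each statement's English description precedes it below -/
import Mathlib

section
/- Fix k ≥ 1, ω ∈ ℝ, g ∈ ℂ, and define on finitely supported sequences in ℓ²(ℕ) the operators H_± := ω N ± (ḡ a^k + g (a†)^k), where N is the number operator and a, a† the annihilation/creation operators. Let X_k e_m = (−1)^(⌊m/k⌋) e_m be the generalized parity. Then X_k H₊ = H₋ X_k on finitely supported sequences. -/
open scoped ComplexConjugate

theorem stmt_14 (k : ℕ) (hk : 1 ≤ k) (ω : ℝ) (g : ℂ)
    (N a c X : Module.End ℂ (ℕ →₀ ℂ))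
    (hN : ∀ n : ℕ, N (Finsupp.single n 1) = (n : ℂ) • Finsupp.single n 1)
    (ha0 : a (Finsupp.single 0 1) = 0)
    (ha : ∀ n : ℕ, a (Finsupp.single (n + 1) 1) =
      (Real.sqrt (n + 1) : ℂ) • Finsupp.single n 1)
    (hc : ∀ n : ℕ, c (Finsupp.single n 1) =
      (Real.sqrt (n + 1) : ℂ) • Finsupp.single (n + 1) 1)
    (hX : ∀ m : ℕ, X (Finsupp.single m 1) =
      (-1 : ℂ) ^ (m / k) • Finsupp.single m 1) :
    X * ((ω : ℂ) • N + (conj g • a ^ k + g • c ^ k)) =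
      ((ω : ℂ) • N - (conj g • a ^ k + g • c ^ k)) * X := by
  have hk0 : 0 < k := hk
  -- a^j kills low states
  have hlow : ∀ j m : ℕ, m < j → (a ^ j) (Finsupp.single m 1) = 0 := by
    intro j
    induction j with
    | zero => intro m hm; omega
    | succ j ih =>
      intro m hm
      rw [pow_succ, Module.End.mul_apply]
      cases m with
      | zero => rw [ha0, map_zero]
      | succ n =>
        rw [ha n, map_smul, ih n (by omega), smul_zero]
  -- a^j lowers by j
  have hdown : ∀ j m : ℕ, ∃ z : ℂ,
      (a ^ j) (Finsupp.single (m + j) 1) = z • Finsupp.single m 1 := by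
    intro j
    induction j with
    | zero => intro m; exact ⟨1, by simp⟩
    | succ j ih =>
      intro m
      obtain ⟨z, hz⟩ := ih m
      refine ⟨(Real.sqrt (m + j + 1) : ℂ) * z, ?_⟩
      rw [pow_succ, Module.End.mul_apply]
      have : m + (j + 1) = (m + j) + 1 := by omega
      rw [this, ha (m + j), map_smul, hz, smul_smul]
      push_cast
      ring_nf
  -- c^j raises by j
  have hup : ∀ j m : ℕ, ∃ z : ℂ,
      (c ^ j) (Finsupp.single m 1) = z • Finsupp.single (m + j) 1 := by
    intro j
    induction j with
    | zero => intro m; exact ⟨1, by simp⟩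
    | succ j ih =>
      intro m
      obtain ⟨z, hz⟩ := ih (m + 1)
      refine ⟨z * (Real.sqrt (m + 1) : ℂ), ?_⟩
      rw [pow_succ, Module.End.mul_apply, hc m, map_smul, hz]
      have : m + 1 + j = m + (j + 1) := by omega
      rw [this, smul_smul, mul_comm]
  -- sign flip
  have hsig : ∀ n : ℕ, (-1 : ℂ) ^ ((n + k) / k) = -(-1 : ℂ) ^ (n / k) := by
    intro n
    rw [Nat.add_div_right n hk0, pow_succ]
    ring
  apply Finsupp.lhom_ext'
  intro m
  apply LinearMap.ext_ring
  simp only [LinearMap.comp_apply, Finsupp.lsingle_apply, Module.End.mul_apply,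
    LinearMap.add_apply, LinearMap.sub_apply, LinearMap.smul_apply]
  obtain ⟨z, hz⟩ := hup k m
  rcases lt_or_ge m k with hm | hm
  · have h0 : (a ^ k) (Finsupp.single m 1) = 0 := hlow k m hm
    simp only [hN, h0, hz, map_add, map_smul, map_zero, smul_zero, hX, hsig,
      smul_smul]
    module
  · obtain ⟨n, rfl⟩ : ∃ n, m = n + k := ⟨m - k, by omega⟩
    obtain ⟨w, hw⟩ := hdown k n
    simp only [hN, hw, hz, map_add, map_smul, hX, hsig, smul_smul]
    module
end

section
/- Fix k ≥ 1, α, ω ∈ ℝ, g ∈ ℂ. With H_± := ω N ± (ḡ a^k + g (a†)^k) on finitely supported sequences in ℓ²(ℕ), the generalized parity X_k (where X_k e_m = (−1)^(⌊m/k⌋) e_m) satisfies the Riccati equation α X_k² + X_k H₊ − H₋ X_k − α = 0. -/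
open scoped ComplexConjugate

theorem stmt_15 (k : ℕ) (hk : 1 ≤ k) (α ω : ℝ) (g : ℂ)
    (N a c X : Module.End ℂ (ℕ →₀ ℂ))
    (hN : ∀ n : ℕ, N (Finsupp.single n 1) = (n : ℂ) • Finsupp.single n 1)
    (ha0 : a (Finsupp.single 0 1) = 0)
    (ha : ∀ n : ℕ, a (Finsupp.single (n + 1) 1) =
      (Real.sqrt (n + 1) : ℂ) • Finsupp.single n 1)
    (hc : ∀ n : ℕ, c (Finsupp.single n 1) =
      (Real.sqrt (n + 1) : ℂ) • Finsupp.single (n + 1) 1)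
    (hX : ∀ m : ℕ, X (Finsupp.single m 1) =
      (-1 : ℂ) ^ (m / k) • Finsupp.single m 1) :
    (α : ℂ) • (X * X)
      + X * ((ω : ℂ) • N + (conj g • a ^ k + g • c ^ k))
      - ((ω : ℂ) • N - (conj g • a ^ k + g • c ^ k)) * X
      - (α : ℂ) • (1 : Module.End ℂ (ℕ →₀ ℂ)) = 0 := by
  have hk0 : 0 < k := hk
  -- powers of c
  have hcpow : ∀ j n : ℕ, ∃ ν : ℂ,
      (c ^ j) (Finsupp.single n 1) = ν • Finsupp.single (n + j) 1 := by
    intro j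
    induction j with
    | zero => intro n; exact ⟨1, by simp⟩
    | succ j ih =>
      intro n
      obtain ⟨ν, hν⟩ := ih (n + 1)
      refine ⟨(Real.sqrt ((n : ℝ) + 1) : ℂ) * ν, ?_⟩
      have h1 : (c ^ (j + 1)) (Finsupp.single n 1)
          = (c ^ j) (c (Finsupp.single n 1)) := by
        rw [pow_succ, Module.End.mul_apply]
      rw [h1, hc n, map_smul, hν, smul_smul,
        show n + 1 + j = n + (j + 1) by omega]
  -- powers of a
  have hapow : ∀ j n : ℕ, ∃ μ : ℂ,
      (a ^ j) (Finsupp.single n 1)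
        = μ • (if j ≤ n then Finsupp.single (n - j) 1 else (0 : ℕ →₀ ℂ)) := by
    intro j
    induction j with
    | zero => intro n; exact ⟨1, by simp⟩
    | succ j ih =>
      intro n
      have h1 : (a ^ (j + 1)) (Finsupp.single n 1)
          = (a ^ j) (a (Finsupp.single n 1)) := by
        rw [pow_succ, Module.End.mul_apply]
      cases n with
      | zero =>
        refine ⟨0, ?_⟩
        rw [h1, ha0, map_zero]
        simp
      | succ m =>
        obtain ⟨μ, hμ⟩ := ih m
        refine ⟨(Real.sqrt ((m : ℝ) + 1) : ℂ) * μ, ?_⟩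
        rw [h1, ha m, map_smul, hμ, smul_smul]
        by_cases hjm : j ≤ m
        · rw [if_pos hjm, if_pos (by omega : j + 1 ≤ m + 1)]
          have : m - j = m + 1 - (j + 1) := by omega
          rw [this]
        · rw [if_neg hjm, if_neg (by omega : ¬ j + 1 ≤ m + 1)]
  -- prove equality of linear maps on the basis
  apply Finsupp.lhom_ext
  intro n b
  have hb : (Finsupp.single n b : ℕ →₀ ℂ) = b • Finsupp.single n 1 := by
    rw [Finsupp.smul_single, smul_eq_mul, mul_one]
  rw [hb, map_smul, map_smul]
  suffices h : ((α : ℂ) • (X * X)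
      + X * ((ω : ℂ) • N + (conj g • a ^ k + g • c ^ k))
      - ((ω : ℂ) • N - (conj g • a ^ k + g • c ^ k)) * X
      - (α : ℂ) • (1 : Module.End ℂ (ℕ →₀ ℂ))) (Finsupp.single n 1) = 0 by
    rw [h]; simp
  obtain ⟨μ, hμ⟩ := hapow k n
  obtain ⟨ν, hν⟩ := hcpow k n
  set e : ℕ →₀ ℂ := Finsupp.single n 1 with he
  set p : ℂ := (-1 : ℂ) ^ (n / k) with hp
  have hp2 : p * p = 1 := by
    rw [hp, ← pow_add]
    exact Even.neg_one_pow ⟨n / k, rfl⟩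
  have hXe : X e = p • e := hX n
  have hpp : ∀ v : ℕ →₀ ℂ, p • p • v = v := fun v => by
    rw [smul_smul, hp2, one_smul]
  -- X anticommutes with a^k on e
  have hXA : X ((a ^ k) e) = (-p) • ((a ^ k) e) := by
    rw [hμ]
    by_cases hkn : k ≤ n
    · have hdiv : n / k = (n - k) / k + 1 := by
        conv_lhs => rw [← Nat.sub_add_cancel hkn]
        rw [Nat.add_div_right _ hk0]
      have hsgn : ((-1 : ℂ)) ^ ((n - k) / k) = -p := by
        rw [hp, hdiv, pow_succ]; ring
      rw [if_pos hkn, map_smul, hX (n - k), hsgn, smul_smul, smul_smul, mul_comm]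
    · rw [if_neg hkn, smul_zero, map_zero, smul_zero]
  -- X anticommutes with c^k on e
  have hXC : X ((c ^ k) e) = (-p) • ((c ^ k) e) := by
    have hdiv : (n + k) / k = n / k + 1 := Nat.add_div_right _ hk0
    have hsgn : ((-1 : ℂ)) ^ ((n + k) / k) = -p := by
      rw [hp, hdiv, pow_succ]; ring
    rw [hν, map_smul, hX (n + k), hsgn, smul_smul, smul_smul, mul_comm]
  have hN' : N e = (n : ℂ) • e := hN n
  simp only [LinearMap.sub_apply, LinearMap.add_apply, LinearMap.smul_apply,
    Module.End.mul_apply, Module.End.one_apply, map_add, map_smul]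
  simp only [hN', map_smul, hXA, hXC, hXe, map_smul, hpp]
  module
end
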